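/- Let F be a field and n ≥ k ≥ 1. Then for every n×k matrix X over F and every k×k matrix Y over F, det_{n,k}(XY) = det_{n,k}(X) · det(Y). -/
import Mathlib

open Classical in
noncomputable def cullisDet {F : Type*} [Field F] {n k : ℕ}
    (X : Matrix (Fin n) (Fin k) F) : F :=
  ∑ f : Fin k → Fin n, if StrictMono f then
    (-1 : F) ^ (∑ j : Fin k, ((f j : ℕ) - (j : ℕ))) * (X.submatrix f id).det
  else 0

/-- Lemma 2.11: multiplicativity of the Cullis determinant with respect to
right multiplication by a square matrix. -/
theorem stmt15 {F : Type*} [Field F] {n k : ℕ} (hk : 1 ≤ k) (hkn : k ≤ n)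
    (X : Matrix (Fin n) (Fin k) F) (Y : Matrix (Fin k) (Fin k) F) :
    cullisDet (X * Y) = cullisDet X * Y.det := by
  unfold cullisDet
  rw [Finset.sum_mul]
  apply Finset.sum_congr rfl
  intro f _
  by_cases h : StrictMono f
  · have : (X * Y).submatrix f id = (X.submatrix f id) * Y := by
      ext i j
      simp [Matrix.mul_apply, Matrix.submatrix_apply]
    simp [h, this, Matrix.det_mul, mul_assoc]
  · simp [h]
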